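/- Let A and B be lattices with zero and let ξ : A∖{0} → B be a map with finite range. Then ξ⁽¹⁾ = ξ if and only if ξ is a semilattice homomorphism from ⟨A∖{0}; ∨⟩ to ⟨B; ∧⟩, i.e., ξ(x ∨ y) = ξ(x) ∧ ξ(y) for all x, y ∈ A∖{0}. -/

import Mathlib

/-- The set of candidate values `⋀ξ[S]`, for `S` a nonempty finite subset of `A∖{0}` with
`x ≤ ⋁S`; the one-step adjustment `ξ⁽¹⁾(x)` is the join (least upper bound) of this set. -/
def adjSet {α β : Type*} [Lattice α] [OrderBot α] [Lattice β] [OrderBot β]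
    (ξ : {a : α // a ≠ ⊥} → β) (x : {a : α // a ≠ ⊥}) : Set β :=
  {c | ∃ (S : Finset {a : α // a ≠ ⊥}) (hS : S.Nonempty),
      x.1 ≤ S.sup' hS (fun s => s.1) ∧ c = S.inf' hS ξ}

/-- The nonzero elements of a join-semilattice with zero form a join-semilattice. -/
instance nzSemilatticeSup {α : Type*} [SemilatticeSup α] [OrderBot α] :
    SemilatticeSup {a : α // a ≠ ⊥} :=
  Subtype.semilatticeSup fun {_ _} hx _ hxy => hx (le_bot_iff.mp (hxy ▸ le_sup_left))

lemma self_mem_adjSet {α β : Type*} [Lattice α] [OrderBot α] [Lattice β] [OrderBot β]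
    (ξ : {a : α // a ≠ ⊥} → β) (x : {a : α // a ≠ ⊥}) : ξ x ∈ adjSet ξ x :=
  ⟨{x}, Finset.singleton_nonempty x, by simp, by simp⟩

lemma hom_inf' {α β : Type*} [Lattice α] [OrderBot α] [Lattice β] [OrderBot β]
    (ξ : {a : α // a ≠ ⊥} → β) (h : ∀ x y, ξ (x ⊔ y) = ξ x ⊓ ξ y)
    (S : Finset {a : α // a ≠ ⊥}) (hS : S.Nonempty) :
    ξ (S.sup' hS id) = S.inf' hS ξ := by
  induction hS using Finset.Nonempty.cons_induction with
  | singleton x => simp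
  | cons a s ha hs ih => rw [Finset.sup'_cons, Finset.inf'_cons, ← ih, ← h]; rfl; exact hs

/-- For a finite-range map `ξ : A∖{0} → B`, the one-step adjustment `ξ⁽¹⁾` equals `ξ` iff
`ξ` is a semilattice homomorphism from `⟨A∖{0}; ∨⟩` to `⟨B; ∧⟩`. -/
theorem stmt15 {α β : Type*} [Lattice α] [OrderBot α] [Lattice β] [OrderBot β]
    (ξ ξ' : {a : α // a ≠ ⊥} → β) (hfin : (Set.range ξ).Finite)
    (hadj : ∀ x : {a : α // a ≠ ⊥}, IsLUB (adjSet ξ x) (ξ' x)) :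
    ξ' = ξ ↔ ∀ x y : {a : α // a ≠ ⊥}, ξ (x ⊔ y) = ξ x ⊓ ξ y := by
  classical
  constructor
  · intro heq x y
    rw [heq] at hadj
    -- antitonicity
    have anti : ∀ a b : {a : α // a ≠ ⊥}, a ≤ b → ξ b ≤ ξ a := by
      intro a b hab
      refine (hadj b).2 ?_
      intro c hc
      obtain ⟨S, hS, hle, rfl⟩ := hc
      exact (hadj a).1 ⟨S, hS, le_trans hab hle, rfl⟩
    refine le_antisymm (le_inf (anti _ _ le_sup_left) (anti _ _ le_sup_right)) ?_
    refine (hadj (x ⊔ y)).1 ⟨{x, y}, ⟨x, by simp⟩, ?_, ?_⟩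
    · apply sup_le <;> simp [Finset.sup'_insert]
    · simp [Finset.inf'_insert]
  · intro h
    funext x
    refine IsLUB.unique (hadj x) ?_
    constructor
    · intro c hc
      obtain ⟨S, hS, hle, rfl⟩ := hc
      rw [← hom_inf' ξ h S hS]
      -- ξ antitone from hom property
      have anti : ∀ a b : {a : α // a ≠ ⊥}, a ≤ b → ξ b ≤ ξ a := by
        intro a b hab
        have : a ⊔ b = b := sup_eq_right.mpr hab
        calc ξ b = ξ (a ⊔ b) := by rw [this]
          _ = ξ a ⊓ ξ b := h a b
          _ ≤ ξ a := inf_le_left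
      apply anti
      show x.1 ≤ (S.sup' hS id).1
      have : (S.sup' hS id).1 = S.sup' hS (fun s => s.1) := by
        apply Finset.comp_sup'_eq_sup'_comp hS (Subtype.val) (fun a b => rfl)
      rw [this]; exact hle
    · intro c hc
      exact hc (self_mem_adjSet ξ x)
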